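/- Let A ∈ ℝ^{n×n} be the nilpotent upper-shift matrix (A_{i,i+1} = 1, all other entries 0), b = eₙ the last standard basis vector, and γ > 0. Suppose P(γ) is a positive definite solution of AᵀP + PA - P b bᵀ P = -γP. Then bᵀ P(γ) b = nγ. -/
import Mathlib


open Matrix

/-- for any positive definite solution `P` of the parametric
Lyapunov equation `AᵀP + PA - P b bᵀ P = -γP` (with `A` the upper-shift
nilpotent matrix and `b = eₙ`), one has `bᵀ P b = nγ`. -/
theorem stmt_7 (n : ℕ) (hn : 0 < n) (γ : ℝ) (hγ : 0 < γ)
    (A : Matrix (Fin n) (Fin n) ℝ)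
    (hA : A = Matrix.of fun i j : Fin n => if (i : ℕ) + 1 = (j : ℕ) then (1:ℝ) else 0)
    (b : Fin n → ℝ) (hb : ∀ i, b i = if (i : ℕ) = n - 1 then (1:ℝ) else 0)
    (P : Matrix (Fin n) (Fin n) ℝ) (hP : P.PosDef)
    (hPLE : Aᵀ * P + P * A - P * Matrix.vecMulVec b b * P = -(γ • P)) :
    b ⬝ᵥ (P *ᵥ b) = n * γ := by
  haveI : Invertible P := P.invertibleOfIsUnitDet (isUnit_iff_ne_zero.mpr hP.det_pos.ne')
  have hPP : P⁻¹ * P = 1 := inv_mul_of_invertible P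
  have key := congrArg (fun M => (P⁻¹ * M).trace) hPLE
  simp only [mul_sub, mul_add, trace_sub, trace_add] at key
  have hAtr : A.trace = 0 := by
    subst hA
    simp [Matrix.trace, Matrix.diag]
  have h1 : (P⁻¹ * (Aᵀ * P)).trace = 0 := by
    rw [trace_mul_comm, mul_assoc, mul_inv_of_invertible, mul_one, trace_transpose, hAtr]
  have h2 : (P⁻¹ * (P * A)).trace = 0 := by
    rw [← mul_assoc, hPP, one_mul, hAtr]
  have h3 : (P⁻¹ * (P * Matrix.vecMulVec b b * P)).trace = b ⬝ᵥ (P *ᵥ b) := by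
    rw [← mul_assoc, ← mul_assoc, hPP, one_mul]
    simp [Matrix.trace, Matrix.diag, Matrix.mul_apply, Matrix.vecMulVec_apply,
      dotProduct, Matrix.mulVec, Finset.mul_sum]
    have hs : ∀ i j, P i j = P j i := fun i j => (congrFun (congrFun hP.1 i) j).symm
    exact Finset.sum_congr rfl fun x _ => Finset.sum_congr rfl fun y _ => by
      rw [hs y x]; ring
  have h4 : (P⁻¹ * -(γ • P)).trace = -(γ * n) := by
    rw [mul_neg, Matrix.mul_smul, hPP, trace_neg, trace_smul]
    simp [Matrix.trace_one]
  rw [h1, h2, h3, h4] at key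
  linarith
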